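/- Let (X,d,f) be a dynamical system with a tame defining sequence 𝒜 = {𝒰ₙ}. If f has the shadowing property, then f has the finite shadowing property and the inverse system (↪, 𝒫𝒪(𝒰ₙ)) satisfies the Mittag-Leffler Condition. -/

import Mathlib

/-- The shadowing property: every infinite δ-pseudo-orbit is ε-shadowed. -/
def Shadowing {X : Type*} [PseudoMetricSpace X] (f : X → X) : Prop :=
  ∀ ε > (0 : ℝ), ∃ δ > (0 : ℝ), ∀ x : ℕ → X,
    (∀ n, dist (f (x n)) (x (n + 1)) < δ) →
      ∃ z, ∀ n, dist (f^[n] z) (x n) < ε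

/-- The finite shadowing property: every finite δ-pseudo-orbit is ε-shadowed. -/
def FiniteShadowing {X : Type*} [PseudoMetricSpace X] (f : X → X) : Prop :=
  ∀ ε > (0 : ℝ), ∃ δ > (0 : ℝ), ∀ (k : ℕ) (x : ℕ → X),
    (∀ n < k, dist (f (x n)) (x (n + 1)) < δ) →
      ∃ z, ∀ n ≤ k, dist (f^[n] z) (x n) < ε

/-- `𝒫𝒪(P, f)`: sequences of elements of the partition `P` traced by pseudo-orbits. -/
def PO {X : Type*} (f : X → X) (P : Set (Set X)) : Set (ℕ → Set X) :=
  {O | (∀ i, O i ∈ P) ∧ ∀ i, (f '' O i ∩ O (i + 1)).Nonempty}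

/-- The image of `𝒫𝒪(Pi, f)` in `Pn^ℕ` under the refinement bonding maps. -/
def POImage {X : Type*} (f : X → X) (Pn Pi : Set (Set X)) : Set (ℕ → Set X) :=
  {V | (∀ j, V j ∈ Pn) ∧ ∃ O ∈ PO f Pi, ∀ j, O j ⊆ V j}

/-- If `(X,d,f)` has the shadowing property and `{𝒰ₙ}` is a tame defining sequence of `(X,d)`,
then `f` has the finite shadowing property and the inverse system `(↪, 𝒫𝒪(𝒰ₙ))` satisfies the
Mittag-Leffler Condition. -/
theorem finiteShadowing_and_ML_of_shadowing {X : Type*} [MetricSpace X]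
    (f : X → X) (hf : Continuous f)
    (𝒰 : ℕ → Set (Set X))
    (hne : ∀ n, ∀ U ∈ 𝒰 n, U.Nonempty)
    (hclopen : ∀ n, ∀ U ∈ 𝒰 n, IsClopen U)
    (hdisj : ∀ n, ∀ U ∈ 𝒰 n, ∀ V ∈ 𝒰 n, U ≠ V → Disjoint U V)
    (hcover : ∀ n, ⋃₀ 𝒰 n = Set.univ)
    (hrefine : ∀ n, ∀ U ∈ 𝒰 (n + 1), ∃ V ∈ 𝒰 n, U ⊆ V)
    (hbasis : ∀ (x : X) (W : Set X), IsOpen W → x ∈ W → ∃ n, ∃ U ∈ 𝒰 n, x ∈ U ∧ U ⊆ W)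
    (S : ℕ → ℝ) (hS : ∀ n, ∀ U ∈ 𝒰 n, ∀ x ∈ U, ∀ y ∈ U, dist x y ≤ S n)
    (hS0 : Filter.Tendsto S Filter.atTop (nhds 0))
    (ρ : ℕ → ℝ) (hρ : ∀ n, 0 < ρ n)
    (hsep : ∀ n, ∀ U ∈ 𝒰 n, ∀ V ∈ 𝒰 n, U ≠ V → ∀ x ∈ U, ∀ y ∈ V, ρ n ≤ dist x y)
    (hsh : Shadowing f) :
    FiniteShadowing f ∧
    ∀ N : ℕ, ∃ k > N, ∀ i ≥ k,
      POImage f (𝒰 N) (𝒰 (i + 1)) = POImage f (𝒰 N) (𝒰 (k + 1)) := by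
  have hloc : ∀ (n : ℕ) (x : X), ∃ U ∈ 𝒰 n, x ∈ U := by
    intro n x
    have hx : x ∈ ⋃₀ 𝒰 n := by rw [hcover n]; trivial
    simpa using hx
  have hrefge : ∀ n m : ℕ, n ≤ m → ∀ U ∈ 𝒰 m, ∃ V ∈ 𝒰 n, U ⊆ V := by
    intro n m hnm
    induction m, hnm using Nat.le_induction with
    | base => exact fun U hU => ⟨U, hU, subset_rfl⟩
    | succ m hm ih =>
      intro U hU
      obtain ⟨W, hW, hUW⟩ := hrefine m U hU
      obtain ⟨V, hV, hWV⟩ := ih W hW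
      exact ⟨V, hV, hUW.trans hWV⟩
  have huniq : ∀ (n : ℕ) (U V : Set X), U ∈ 𝒰 n → V ∈ 𝒰 n → (U ∩ V).Nonempty → U = V := by
    rintro n U V hU hV ⟨p, hpU, hpV⟩
    by_contra h
    exact Set.disjoint_left.mp (hdisj n U hU V hV h) hpU hpV
  constructor
  · intro ε hε
    obtain ⟨δ, hδ, hsd⟩ := hsh ε hε
    refine ⟨δ, hδ, fun k x hx => ?_⟩
    set y : ℕ → X := fun n => if n ≤ k then x n else f^[n - k] (x k) with hy
    have hpo : ∀ n, dist (f (y n)) (y (n + 1)) < δ := by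
      intro n
      rcases lt_or_ge n k with h | h
      · have h1 : n ≤ k := h.le
        have h2 : n + 1 ≤ k := h
        simpa [hy, h1, h2] using hx n h
      · have heq : y (n + 1) = f (y n) := by
          rcases eq_or_lt_of_le h with rfl | h'
          · have h2 : ¬ k + 1 ≤ k := by omega
            simp [hy, h2]
          · have h1 : ¬ n ≤ k := not_le.mpr h'
            have h2 : ¬ n + 1 ≤ k := by omega
            have h3 : n + 1 - k = (n - k) + 1 := by omega
            simp [hy, h1, h2, h3, Function.iterate_succ_apply']
        simpa [heq] using hδ
    obtain ⟨z, hz⟩ := hsd y hpo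
    refine ⟨z, fun n hn => ?_⟩
    have := hz n
    simpa [hy, hn] using this
  · intro N
    obtain ⟨δ, hδ, hsd⟩ := hsh (ρ N) (hρ N)
    obtain ⟨M, hM⟩ := Metric.tendsto_atTop.mp hS0 δ hδ
    set k := max (N + 1) M with hk
    have hkN : k > N := lt_of_lt_of_le (Nat.lt_succ_self N) (le_max_left _ _)
    refine ⟨k, hkN, fun i hi => ?_⟩
    ext V
    constructor
    · rintro ⟨hV, O, ⟨hO1, hO2⟩, hsub⟩
      have hik : k + 1 ≤ i + 1 := by omega
      choose O' hO'mem hO'sub using fun j => hrefge (k + 1) (i + 1) hik (O j) (hO1 j)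
      refine ⟨hV, O', ⟨hO'mem, fun j => ?_⟩, fun j => ?_⟩
      · exact (hO2 j).mono
          (Set.inter_subset_inter (Set.image_mono (f := f) (hO'sub j)) (hO'sub (j + 1)))
      · obtain ⟨W, hW, hW2⟩ := hrefge N (k + 1) (by omega) (O' j) (hO'mem j)
        obtain ⟨p, hp⟩ := hne (i + 1) (O j) (hO1 j)
        have hWV : W = V j :=
          huniq N W (V j) hW (hV j) ⟨p, hW2 (hO'sub j hp), hsub j hp⟩
        exact hWV ▸ hW2
    · rintro ⟨hV, O, ⟨hO1, hO2⟩, hsub⟩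
      have hex : ∀ j, ∃ a, a ∈ O j ∧ f a ∈ O (j + 1) := by
        intro j
        obtain ⟨p, ⟨a, haO, rfl⟩, hp2⟩ := hO2 j
        exact ⟨a, haO, hp2⟩
      choose x hx1 hx2 using hex
      have hpo : ∀ j, dist (f (x j)) (x (j + 1)) < δ := by
        intro j
        have h1 : dist (f (x j)) (x (j + 1)) ≤ S (k + 1) :=
          hS (k + 1) (O (j + 1)) (hO1 (j + 1)) _ (hx2 j) _ (hx1 (j + 1))
        have h2 : S (k + 1) < δ :=
          calc S (k + 1) ≤ |S (k + 1)| := le_abs_self _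
          _ = dist (S (k + 1)) 0 := by simp [Real.dist_eq]
          _ < δ := hM (k + 1) ((le_max_right (N + 1) M).trans (Nat.le_succ k))
        exact h1.trans_lt h2
      obtain ⟨z, hz⟩ := hsd x hpo
      choose O' hO'mem hO'z using fun j => hloc (i + 1) (f^[j] z)
      refine ⟨hV, O', ⟨hO'mem, fun j => ?_⟩, fun j => ?_⟩
      · exact ⟨f^[j + 1] z,
          ⟨f^[j] z, hO'z j, (Function.iterate_succ_apply' f j z).symm⟩, hO'z (j + 1)⟩
      · obtain ⟨W, hW, hW2⟩ := hrefge N (i + 1) (by omega) (O' j) (hO'mem j)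
        have hWV : W = V j := by
          by_contra hne'
          exact absurd (hz j)
            (not_lt.mpr (hsep N W hW (V j) (hV j) hne' (f^[j] z) (hW2 (hO'z j))
              (x j) (hsub j (hx1 j))))
        exact hWV ▸ hW2
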